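/- arXiv:1407.2680 — 4 statements merged into one kernel-verified Lean document; each statement's English description precedes it below -/
import Mathlib

section
/- If G₁ and G₂ are two graphs with the same number n of vertices, then E(G₁) - E(G₂) = (1/π) ∫_{-∞}^{∞} log |φ(G₁, ix)/φ(G₂, ix)| dx, where E(G) is the sum of the absolute values of the adjacency eigenvalues of G and φ the characteristic polynomial (with i the imaginary unit). -/
open Polynomial MeasureTheory
open Real Set Filter Topology Matrix


noncomputable def Fab (a b : ℝ) : ℝ → ℝ := fun x =>
  x * (Real.log (x^2 + a^2) - Real.log (x^2 + b^2))
    + 2*a*Real.arctan (x/a) - 2*b*Real.arctan (x/b)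

lemma hasDerivAt_arctanTerm {a : ℝ} (ha : 0 ≤ a) {x : ℝ} (hx : 0 < x) :
    HasDerivAt (fun y : ℝ => 2*a*Real.arctan (y/a)) (2*a^2/(x^2+a^2)) x := by
  rcases eq_or_lt_of_le ha with rfl|ha'
  · have : (fun y : ℝ => 2*(0:ℝ)*Real.arctan (y/0)) = fun _ => (0:ℝ) := by
      funext y; ring
    rw [this]
    simpa using (hasDerivAt_const x (0:ℝ))
  · have h1 : HasDerivAt (fun y : ℝ => y / a) (1/a) x := (hasDerivAt_id x).div_const a
    have h2 := (Real.hasDerivAt_arctan (x/a)).comp x h1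
    have h3 := h2.const_mul (2*a)
    refine h3.congr_deriv ?_
    have hxa : (0:ℝ) < x^2 + a^2 := by positivity
    field_simp
    ring

lemma hasDerivAt_logsq {c : ℝ} {x : ℝ} (hx : 0 < x) :
    HasDerivAt (fun y : ℝ => Real.log (y^2 + c^2)) (2*x/(x^2+c^2)) x := by
  have h1 : HasDerivAt (fun y : ℝ => y^2 + c^2) (2*x) x := by
    simpa using (hasDerivAt_pow 2 x).add_const (c^2)
  have hne : x^2 + c^2 ≠ 0 := by positivity
  exact h1.log hne

lemma hasDerivAt_Fab {a b : ℝ} (ha : 0 ≤ a) (hb : 0 ≤ b) {x : ℝ} (hx : 0 < x) :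
    HasDerivAt (Fab a b) (Real.log ((x^2+a^2)/(x^2+b^2))) x := by
  have hpa : (0:ℝ) < x^2 + a^2 := by positivity
  have hpb : (0:ℝ) < x^2 + b^2 := by positivity
  have h1 : HasDerivAt (fun y : ℝ => y * (Real.log (y^2 + a^2) - Real.log (y^2 + b^2)))
      (1 * (Real.log (x^2 + a^2) - Real.log (x^2 + b^2))
        + x * (2*x/(x^2+a^2) - 2*x/(x^2+b^2))) x :=
    (hasDerivAt_id x).mul ((hasDerivAt_logsq hx).sub (hasDerivAt_logsq hx))
  have h := (h1.add (hasDerivAt_arctanTerm ha hx)).sub (hasDerivAt_arctanTerm hb hx)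
  refine h.congr_deriv ?_
  rw [Real.log_div hpa.ne' hpb.ne']
  field_simp
  ring

lemma Fab_zero (a b : ℝ) : Fab a b 0 = 0 := by
  simp [Fab]

lemma continuousWithinAt_mul_logsq (c : ℝ) :
    ContinuousWithinAt (fun y : ℝ => y * Real.log (y^2 + c^2)) (Ici 0) 0 := by
  rcases eq_or_ne c 0 with rfl|hc
  · have : (fun y : ℝ => y * Real.log (y^2 + 0^2)) = fun y => 2 * (y * Real.log y) := by
      funext y
      rw [show y^2 + (0:ℝ)^2 = y^2 by ring, Real.log_pow]
      push_cast; ring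
    rw [this]
    exact (continuous_const.mul Real.continuous_mul_log).continuousWithinAt
  · have h1 : ContinuousAt (fun y : ℝ => y^2 + c^2) 0 := by fun_prop
    have h2 : ContinuousAt (fun y : ℝ => Real.log (y^2 + c^2)) 0 :=
      h1.log (by simp; positivity)
    exact (continuousAt_id.mul h2).continuousWithinAt

lemma continuousWithinAt_Fab (a b : ℝ) : ContinuousWithinAt (Fab a b) (Ici 0) 0 := by
  have harc : ∀ c : ℝ, Continuous (fun y : ℝ => 2*c*Real.arctan (y/c)) := fun c =>
    continuous_const.mul (Real.continuous_arctan.comp (continuous_id.div_const c))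
  have h1 := (continuousWithinAt_mul_logsq a).sub (continuousWithinAt_mul_logsq b)
  have h2 := ((harc a).continuousWithinAt (s := Ici 0) (x := 0)).sub
    ((harc b).continuousWithinAt (s := Ici 0) (x := 0))
  have := (h1.add ((harc a).continuousWithinAt (s := Ici 0) (x := 0))).sub
    ((harc b).continuousWithinAt (s := Ici 0) (x := 0))
  convert this using 1
  funext y
  simp only [Fab, Pi.add_apply, Pi.sub_apply]
  ring_nf

lemma xlog_bound {a b x : ℝ} (hx : 1 ≤ x) :
    x * (Real.log (x^2 + a^2) - Real.log (x^2 + b^2)) ≤ a^2 / x := by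
  have hx0 : (0:ℝ) < x := lt_of_lt_of_le one_pos hx
  have hpa : (0:ℝ) < x^2 + a^2 := by positivity
  have hpb : (0:ℝ) < x^2 + b^2 := by positivity
  have hlog : Real.log (x^2 + a^2) - Real.log (x^2 + b^2) ≤ (a^2 - b^2)/(x^2 + b^2) := by
    rw [← Real.log_div hpa.ne' hpb.ne']
    have := Real.log_le_sub_one_of_pos (div_pos hpa hpb)
    calc Real.log ((x^2+a^2)/(x^2+b^2)) ≤ (x^2+a^2)/(x^2+b^2) - 1 := this
      _ = (a^2 - b^2)/(x^2+b^2) := by field_simp; ring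
  calc x * (Real.log (x^2 + a^2) - Real.log (x^2 + b^2))
      ≤ x * ((a^2 - b^2)/(x^2 + b^2)) := by
        exact mul_le_mul_of_nonneg_left hlog hx0.le
    _ = x * (a^2 - b^2)/(x^2 + b^2) := by ring
    _ ≤ a^2 / x := by
        rw [div_le_div_iff₀ hpb hx0]
        nlinarith [sq_nonneg b, sq_nonneg (b*x), sq_nonneg a]

lemma tendsto_xlog (a b : ℝ) :
    Tendsto (fun x : ℝ => x * (Real.log (x^2 + a^2) - Real.log (x^2 + b^2))) atTop (𝓝 0) := by
  have hupper : Tendsto (fun x : ℝ => a^2 / x) atTop (𝓝 0) := by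
    simpa [div_eq_mul_inv] using tendsto_inv_atTop_zero.const_mul (a^2)
  have hlower : Tendsto (fun x : ℝ => -(b^2 / x)) atTop (𝓝 0) := by
    simpa [div_eq_mul_inv] using (tendsto_inv_atTop_zero.const_mul (b^2)).neg
  refine tendsto_of_tendsto_of_tendsto_of_le_of_le' hlower hupper ?_ ?_
  · filter_upwards [eventually_ge_atTop (1:ℝ)] with x hx
    have := xlog_bound (a := b) (b := a) hx
    linarith
  · filter_upwards [eventually_ge_atTop (1:ℝ)] with x hx
    exact xlog_bound hx

lemma tendsto_arctanTerm {a : ℝ} (ha : 0 ≤ a) :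
    Tendsto (fun x : ℝ => 2*a*Real.arctan (x/a)) atTop (𝓝 (Real.pi * a)) := by
  rcases eq_or_lt_of_le ha with rfl|ha'
  · simpa using tendsto_const_nhds (α := ℝ) (f := atTop (α := ℝ)) (a := (0:ℝ))
  · have h1 : Tendsto (fun x : ℝ => x / a) atTop atTop :=
      tendsto_id.atTop_div_const ha'
    have h2 := (tendsto_nhds_of_tendsto_nhdsWithin Real.tendsto_arctan_atTop).comp h1
    have h3 := h2.const_mul (2*a)
    convert h3 using 2
    · simp only [Function.comp_apply]
    · ring

lemma tendsto_Fab {a b : ℝ} (ha : 0 ≤ a) (hb : 0 ≤ b) :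
    Tendsto (Fab a b) atTop (𝓝 (Real.pi * a - Real.pi * b)) := by
  have := ((tendsto_xlog a b).add (tendsto_arctanTerm ha)).sub (tendsto_arctanTerm hb)
  unfold Fab
  simpa using this

lemma core_Ioi {a b : ℝ} (hb : 0 ≤ b) (hba : b ≤ a) :
    IntegrableOn (fun x : ℝ => Real.log ((x^2+a^2)/(x^2+b^2))) (Ioi 0) ∧
    ∫ x in Ioi (0:ℝ), Real.log ((x^2+a^2)/(x^2+b^2)) = Real.pi * a - Real.pi * b := by
  have ha : 0 ≤ a := hb.trans hba
  have hderiv : ∀ x ∈ Ioi (0:ℝ), HasDerivAt (Fab a b) (Real.log ((x^2+a^2)/(x^2+b^2))) x :=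
    fun x hx => hasDerivAt_Fab ha hb hx
  have hcont := continuousWithinAt_Fab a b
  have htend := tendsto_Fab ha hb
  have hsign : ∀ x ∈ Ioi (0:ℝ), 0 ≤ Real.log ((x^2+a^2)/(x^2+b^2)) := by
    intro x hx
    apply Real.log_nonneg
    rw [le_div_iff₀ (add_pos_of_pos_of_nonneg (pow_pos hx 2) (sq_nonneg b))]
    nlinarith [pow_le_pow_left₀ hb hba 2]
  have hint : IntegrableOn (fun x : ℝ => Real.log ((x^2+a^2)/(x^2+b^2))) (Ioi 0) :=
    integrableOn_Ioi_deriv_of_nonneg hcont hderiv hsign htend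
  refine ⟨hint, ?_⟩
  rw [integral_Ioi_of_hasDerivAt_of_tendsto hcont hderiv hint htend, Fab_zero]
  ring

lemma integrable_comp_abs' {f : ℝ → ℝ} (hf : IntegrableOn f (Ioi 0)) :
    Integrable (fun x => f |x|) := by
  have hIoi : IntegrableOn (fun x => f |x|) (Ioi 0) := by
    apply hf.congr_fun (fun x hx => by rw [abs_of_pos hx]) measurableSet_Ioi
  have hIic : IntegrableOn (fun x ↦ f |x|) (Iic 0) := by
    rw [← Measure.map_neg_eq_self (volume : Measure ℝ)]
    have m : MeasurableEmbedding fun x : ℝ => -x := (Homeomorph.neg ℝ).measurableEmbedding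
    rw [m.integrableOn_map_iff]
    simp_rw [Function.comp_def, abs_neg, neg_preimage, neg_Iic, neg_zero]
    exact (integrableOn_Ici_iff_integrableOn_Ioi).mpr hIoi
  have := hIic.union hIoi
  rw [Iic_union_Ioi] at this
  exact integrableOn_univ.mp this

lemma logratio_neg (a b : ℝ) (x : ℝ) :
    Real.log ((x^2+a^2)/(x^2+b^2)) = -Real.log ((x^2+b^2)/(x^2+a^2)) := by
  rw [← Real.log_inv, inv_div]

lemma logratio_ints (a b : ℝ) :
    Integrable (fun x : ℝ => Real.log ((x^2+a^2)/(x^2+b^2))) ∧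
    ∫ x : ℝ, Real.log ((x^2+a^2)/(x^2+b^2)) = 2*Real.pi*(|a| - |b|) := by
  -- replace a,b by |a|,|b|
  have habs : (fun x : ℝ => Real.log ((x^2+a^2)/(x^2+b^2)))
      = fun x : ℝ => Real.log ((x^2+|a|^2)/(x^2+|b|^2)) := by
    funext x; rw [sq_abs, sq_abs]
  have key : ∀ a b : ℝ, 0 ≤ b → b ≤ a →
      Integrable (fun x : ℝ => Real.log ((x^2+a^2)/(x^2+b^2))) ∧
      ∫ x : ℝ, Real.log ((x^2+a^2)/(x^2+b^2)) = 2*Real.pi*(a - b) := by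
    intro a b hb hba
    obtain ⟨hint, hval⟩ := core_Ioi hb hba
    have hcomp : (fun x : ℝ => Real.log ((x^2+a^2)/(x^2+b^2)))
        = fun x : ℝ => Real.log ((|x|^2+a^2)/(|x|^2+b^2)) := by
      funext x; rw [sq_abs]
    have hca := integral_comp_abs (f := fun y : ℝ => Real.log ((y^2+a^2)/(y^2+b^2)))
    have hia := integrable_comp_abs' (f := fun y : ℝ => Real.log ((y^2+a^2)/(y^2+b^2))) hint
    constructor
    · rw [hcomp]; exact hia
    · rw [hcomp]
      rw [show (∫ x : ℝ, Real.log ((|x|^2+a^2)/(|x|^2+b^2))) = 2 * ∫ x in Ioi (0:ℝ), Real.log ((x^2+a^2)/(x^2+b^2)) from hca, hval]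
      ring
  rw [habs]
  rcases le_total |b| |a| with h|h
  · exact key _ _ (abs_nonneg b) h
  · obtain ⟨hint, hval⟩ := key |b| |a| (abs_nonneg a) h
    have hneg : (fun x : ℝ => Real.log ((x^2+|a|^2)/(x^2+|b|^2)))
        = fun x : ℝ => -Real.log ((x^2+|b|^2)/(x^2+|a|^2)) := by
      funext x; exact logratio_neg _ _ x
    rw [hneg]
    refine ⟨hint.neg, ?_⟩
    rw [integral_neg, hval]
    ring


lemma charpoly_eq_prod {n : Type*} [Fintype n] [DecidableEq n] {A : Matrix n n ℝ}
    (hA : A.IsHermitian) :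
    A.charpoly = ∏ i, (X - C (hA.eigenvalues i)) := by
  classical
  set U : Matrix n n ℝ := (hA.eigenvectorUnitary : Matrix n n ℝ) with hUdef
  have hU : U * star U = 1 := Matrix.mem_unitaryGroup_iff.mp hA.eigenvectorUnitary.2
  have hspec : A = U * Matrix.diagonal hA.eigenvalues * star U := by
    have h := hA.spectral_theorem
    rw [RCLike.ofReal_real_eq_id] at h
    simpa using h
  set D : Matrix n n ℝ := Matrix.diagonal hA.eigenvalues with hD
  have hmap1 : (U * star U).map (C : ℝ →+* ℝ[X]) = 1 := by
    rw [hU, Matrix.map_one _ (map_zero C) (map_one C)]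
  have hcomm : Matrix.scalar n (X : ℝ[X]) * (U.map C * (star U).map C)
      = U.map C * Matrix.scalar n (X : ℝ[X]) * (star U).map C := by
    rw [← mul_assoc]
    congr 1
    exact (Matrix.scalar_commute (X : ℝ[X]) (fun r' => Commute.all _ _) (U.map C))
  have hchar : charmatrix A = U.map C * charmatrix D * (star U).map C := by
    rw [Matrix.charmatrix, Matrix.charmatrix]
    have hAC : A.map (C : ℝ →+* ℝ[X]) = U.map C * D.map C * (star U).map C := by
      rw [hspec, Matrix.map_mul, Matrix.map_mul]
    show Matrix.scalar n (X : ℝ[X]) - (C : ℝ →+* ℝ[X]).mapMatrix A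
      = U.map C * (Matrix.scalar n (X : ℝ[X]) - (C : ℝ →+* ℝ[X]).mapMatrix D) * (star U).map C
    have : (C : ℝ →+* ℝ[X]).mapMatrix A = A.map (C : ℝ →+* ℝ[X]) := rfl
    rw [this, hAC]
    have : (C : ℝ →+* ℝ[X]).mapMatrix D = D.map (C : ℝ →+* ℝ[X]) := rfl
    rw [this, Matrix.mul_sub, Matrix.sub_mul]
    congr 1
    rw [← hcomm, ← Matrix.map_mul, hU, Matrix.map_one _ (map_zero C) (map_one C), mul_one]
  have hdet : A.charpoly = D.charpoly := by
    rw [Matrix.charpoly, Matrix.charpoly, hchar, Matrix.det_mul, Matrix.det_mul]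
    rw [mul_comm (Matrix.det (U.map C)) _, mul_assoc, ← Matrix.det_mul, ← Matrix.map_mul,
      hU, Matrix.map_one _ (map_zero C) (map_one C), Matrix.det_one, mul_one]
  rw [hdet, Matrix.charpoly]
  have : charmatrix D = Matrix.diagonal (fun i => (X : ℝ[X]) - C (hA.eigenvalues i)) := by
    rw [Matrix.charmatrix]
    show Matrix.scalar n (X : ℝ[X]) - D.map (C : ℝ →+* ℝ[X]) = _
    rw [hD, Matrix.diagonal_map (map_zero C)]
    rw [show Matrix.scalar n (X : ℝ[X]) = Matrix.diagonal (fun _ : n => (X : ℝ[X])) from rfl]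
    rw [Matrix.diagonal_sub]
  rw [this, Matrix.det_diagonal]

lemma eval_charpoly_map {n : Type*} [Fintype n] [DecidableEq n] {A : Matrix n n ℝ}
    (hA : A.IsHermitian) (z : ℂ) :
    ((A.charpoly).map (algebraMap ℝ ℂ)).eval z = ∏ i, (z - (hA.eigenvalues i : ℂ)) := by
  rw [charpoly_eq_prod hA, Polynomial.map_prod, eval_prod]
  congr 1
  funext i
  simp

lemma abs_Ix_sub (x a : ℝ) :
    ‖Complex.I * x - a‖ = Real.sqrt (x^2 + a^2) := by
  rw [Complex.norm_def, Complex.normSq_apply]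
  have h1 : (Complex.I * x - (a:ℂ)).re = -a := by simp
  have h2 : (Complex.I * x - (a:ℂ)).im = x := by simp
  rw [h1, h2]
  congr 1
  ring

lemma pointwise_log_abs {ι κ : Type*} [Fintype ι] [Fintype κ]
    (a : ι → ℝ) (b : κ → ℝ) (e : ι ≃ κ) {x : ℝ} (hx : x ≠ 0) :
    Real.log (‖(∏ i, (Complex.I * x - (a i : ℂ))) /
        (∏ j, (Complex.I * x - (b j : ℂ)))‖) =
      ∑ i, (1/2) * Real.log ((x^2 + (a i)^2)/(x^2 + (b (e i))^2)) := by
  have hx2 : (0:ℝ) < x^2 := by positivity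
  have hpos : ∀ c : ℝ, 0 < x^2 + c^2 := fun c => by positivity
  have hsqrt_pos : ∀ c : ℝ, 0 < Real.sqrt (x^2 + c^2) := fun c =>
    Real.sqrt_pos.mpr (hpos c)
  rw [norm_div, norm_prod, norm_prod]
  simp_rw [abs_Ix_sub]
  rw [Real.log_div (Finset.prod_ne_zero_iff.mpr fun i _ => (hsqrt_pos (a i)).ne')
      (Finset.prod_ne_zero_iff.mpr fun j _ => (hsqrt_pos (b j)).ne'),
    Real.log_prod (fun i _ => (hsqrt_pos (a i)).ne'),
    Real.log_prod (fun j _ => (hsqrt_pos (b j)).ne')]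
  rw [← Equiv.sum_comp e (fun j => Real.log (Real.sqrt (x^2 + (b j)^2)))]
  rw [← Finset.sum_sub_distrib]
  congr 1
  funext i
  rw [Real.log_sqrt (hpos (a i)).le, Real.log_sqrt (hpos (b (e i))).le,
    Real.log_div (hpos (a i)).ne' (hpos (b (e i))).ne']
  ring

/-- Coulson-type integral formula for the difference of graph energies: if
`G₁` and `G₂` have the same number of vertices, then
`E(G₁) - E(G₂) = (1/π) ∫ log |φ(G₁, ix)/φ(G₂, ix)| dx`, where the energy
`E(G)` is the sum of the absolute values of the adjacency eigenvalues and `φ`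
is the characteristic polynomial of the adjacency matrix. -/
theorem energy_difference_integral
    {V₁ V₂ : Type*} [Fintype V₁] [Fintype V₂] [DecidableEq V₁] [DecidableEq V₂]
    (G₁ : SimpleGraph V₁) (G₂ : SimpleGraph V₂)
    [DecidableRel G₁.Adj] [DecidableRel G₂.Adj]
    (hcard : Fintype.card V₁ = Fintype.card V₂)
    (h₁ : (G₁.adjMatrix ℝ).IsHermitian) (h₂ : (G₂.adjMatrix ℝ).IsHermitian) :
    (∑ i, |h₁.eigenvalues i|) - (∑ i, |h₂.eigenvalues i|) =
      (1 / Real.pi) * ∫ x : ℝ,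
        Real.log (‖
          (((G₁.adjMatrix ℝ).charpoly.map (algebraMap ℝ ℂ)).eval (Complex.I * x) /
            ((G₂.adjMatrix ℝ).charpoly.map (algebraMap ℝ ℂ)).eval (Complex.I * x))‖) := by
  classical
  set a : V₁ → ℝ := h₁.eigenvalues with ha
  set b : V₂ → ℝ := h₂.eigenvalues with hbdef
  set e : V₁ ≃ V₂ := Fintype.equivOfCardEq hcard with he
  have hae : (fun x : ℝ => Real.log (‖
          (((G₁.adjMatrix ℝ).charpoly.map (algebraMap ℝ ℂ)).eval (Complex.I * x) /
            ((G₂.adjMatrix ℝ).charpoly.map (algebraMap ℝ ℂ)).eval (Complex.I * x))‖))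
      =ᵐ[volume] fun x : ℝ =>
        ∑ i, (1/2) * Real.log ((x^2 + (a i)^2)/(x^2 + (b (e i))^2)) := by
    have h0 : ∀ᵐ x : ℝ, x ≠ (0:ℝ) := by
      rw [ae_iff]
      simp only [not_not, Set.setOf_eq_eq_singleton]
      exact Real.volume_singleton
    filter_upwards [h0] with x hx
    rw [eval_charpoly_map h₁, eval_charpoly_map h₂, pointwise_log_abs a b e hx]
  rw [integral_congr_ae hae,
    integral_finset_sum _ (fun i _ => ((logratio_ints (a i) (b (e i))).1.const_mul (1/2)))]
  have hterm : ∀ i : V₁, ∫ x : ℝ, (1/2) * Real.log ((x^2 + (a i)^2)/(x^2 + (b (e i))^2))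
      = Real.pi * (|a i| - |b (e i)|) := by
    intro i
    rw [MeasureTheory.integral_const_mul, (logratio_ints (a i) (b (e i))).2]
    ring
  simp_rw [hterm]
  rw [show ∑ i, Real.pi * (|a i| - |b (e i)|)
      = Real.pi * ((∑ i, |a i|) - ∑ i, |b (e i)|) by
    rw [← Finset.mul_sum, Finset.sum_sub_distrib]]
  rw [Equiv.sum_comp e (fun j => |b j|)]
  rw [one_div, inv_mul_cancel_left₀ Real.pi_ne_zero]
end

section
/- Define the polynomials f₆(x) = x⁶ + 6x⁴ + 6x², f₈(x) = x⁸ + 8x⁶ + 16x⁴ + 6x², g₆(x) = x⁶ + 6x⁴ + 5x² + 1, g₈(x) = x⁸ + 8x⁶ + 15x⁴ + 8x² + 1, and with Z₁, Z₂ as the roots of t² + (x²+1)t - x² = 0 set A₁ = (f₈ + Z₂f₆)/(Z₁⁴ + Z₁²x²), A₂ = (f₈ + Z₁f₆)/(Z₂⁴ + Z₂²x²), B₁ = (g₈ + Z₂g₆)/(Z₁⁴ + Z₁²x²), B₂ = (g₈ + Z₁g₆)/(Z₂⁴ + Z₂²x²). Then for every nonzero real x, A₁B₂ - A₂B₁ =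 (-3x⁸ - 15x⁶ - 8x⁴)·√(x⁴+6x²+1) / (x⁶·(x⁴+6x²+1)) < 0. -/
theorem A1B2_sub_A2B1_eq_and_neg
    (x : ℝ) (hx : x ≠ 0)
    (Z₁ Z₂ f₆ f₈ g₆ g₈ A₁ A₂ B₁ B₂ : ℝ)
    (hZ₁ : Z₁ = (-x ^ 2 - 1 + Real.sqrt (x ^ 4 + 6 * x ^ 2 + 1)) / 2)
    (hZ₂ : Z₂ = (-x ^ 2 - 1 - Real.sqrt (x ^ 4 + 6 * x ^ 2 + 1)) / 2)
    (hf₆ : f₆ = x ^ 6 + 6 * x ^ 4 + 6 * x ^ 2)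
    (hf₈ : f₈ = x ^ 8 + 8 * x ^ 6 + 16 * x ^ 4 + 6 * x ^ 2)
    (hg₆ : g₆ = x ^ 6 + 6 * x ^ 4 + 5 * x ^ 2 + 1)
    (hg₈ : g₈ = x ^ 8 + 8 * x ^ 6 + 15 * x ^ 4 + 8 * x ^ 2 + 1)
    (hA₁ : A₁ = (f₈ + Z₂ * f₆) / (Z₁ ^ 4 + Z₁ ^ 2 * x ^ 2))
    (hA₂ : A₂ = (f₈ + Z₁ * f₆) / (Z₂ ^ 4 + Z₂ ^ 2 * x ^ 2))
    (hB₁ : B₁ = (g₈ + Z₂ * g₆) / (Z₁ ^ 4 + Z₁ ^ 2 * x ^ 2))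
    (hB₂ : B₂ = (g₈ + Z₁ * g₆) / (Z₂ ^ 4 + Z₂ ^ 2 * x ^ 2)) :
    A₁ * B₂ - A₂ * B₁ =
      (-3 * x ^ 8 - 15 * x ^ 6 - 8 * x ^ 4) * Real.sqrt (x ^ 4 + 6 * x ^ 2 + 1) /
        (x ^ 6 * (x ^ 4 + 6 * x ^ 2 + 1)) ∧
    A₁ * B₂ - A₂ * B₁ < 0 := by
  have hx2 : 0 < x ^ 2 := by positivity
  have hD : (0:ℝ) < x ^ 4 + 6 * x ^ 2 + 1 := by positivity
  set s := Real.sqrt (x ^ 4 + 6 * x ^ 2 + 1) with hs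
  have hs2 : s ^ 2 = x ^ 4 + 6 * x ^ 2 + 1 := Real.sq_sqrt hD.le
  have hs_pos : 0 < s := Real.sqrt_pos.2 hD
  have hsgt : x ^ 2 + 1 < s := by nlinarith [sq_nonneg (s - x ^ 2 - 1)]
  have hZ1pos : 0 < Z₁ := by rw [hZ₁]; linarith
  have hZ2neg : Z₂ < 0 := by rw [hZ₂]; nlinarith
  have hq1 : 0 < Z₁ ^ 2 := pow_pos hZ1pos 2
  have hq2 : 0 < Z₂ ^ 2 := pow_two_pos_of_ne_zero (ne_of_lt hZ2neg)
  have hd1 : 0 < Z₁ ^ 4 + Z₁ ^ 2 * x ^ 2 := by nlinarith [mul_pos hq1 hq1, mul_pos hq1 hx2]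
  have hd2 : 0 < Z₂ ^ 4 + Z₂ ^ 2 * x ^ 2 := by nlinarith [mul_pos hq2 hq2, mul_pos hq2 hx2]
  have e1 : Z₁ * Z₂ = -x ^ 2 := by
    rw [hZ₁, hZ₂]; linear_combination (-(1:ℝ)/4) * hs2
  have e2 : Z₁ + Z₂ = -x ^ 2 - 1 := by rw [hZ₁, hZ₂]; ring
  have e3 : Z₁ - Z₂ = s := by rw [hZ₁, hZ₂]; ring
  have h1 : Z₁ ^ 2 * Z₂ ^ 2 = x ^ 4 := by
    linear_combination (Z₁ * Z₂ - x ^ 2) * e1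
  have h2 : Z₁ ^ 2 + Z₂ ^ 2 = x ^ 4 + 4 * x ^ 2 + 1 := by
    linear_combination (Z₁ + Z₂ - x ^ 2 - 1) * e2 + (-2 : ℝ) * e1
  have hdenprod :
      (Z₁ ^ 4 + Z₁ ^ 2 * x ^ 2) * (Z₂ ^ 4 + Z₂ ^ 2 * x ^ 2)
        = x ^ 6 * (x ^ 4 + 6 * x ^ 2 + 1) := by
    linear_combination
      (Z₁ ^ 2 * Z₂ ^ 2 + 2 * x ^ 4 + x ^ 2 * (Z₁ ^ 2 + Z₂ ^ 2)) * h1 + x ^ 6 * h2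
  have key : A₁ * B₂ - A₂ * B₁ =
      (-3 * x ^ 8 - 15 * x ^ 6 - 8 * x ^ 4) * s /
        (x ^ 6 * (x ^ 4 + 6 * x ^ 2 + 1)) := by
    rw [hA₁, hA₂, hB₁, hB₂, div_mul_div_comm, div_mul_div_comm,
      mul_comm (Z₂ ^ 4 + Z₂ ^ 2 * x ^ 2), div_sub_div_same, hdenprod]
    have hnum : (f₈ + Z₂ * f₆) * (g₈ + Z₁ * g₆) - (f₈ + Z₁ * f₆) * (g₈ + Z₂ * g₆)
        = (-3 * x ^ 8 - 15 * x ^ 6 - 8 * x ^ 4) * s := by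
      rw [hf₆, hf₈, hg₆, hg₈]
      have : (f₈ + Z₂ * f₆) * (g₈ + Z₁ * g₆) - (f₈ + Z₁ * f₆) * (g₈ + Z₂ * g₆)
          = (Z₁ - Z₂) * (f₈ * g₆ - f₆ * g₈) := by ring
      rw [hf₆, hf₈, hg₆, hg₈] at this
      rw [this, e3]; ring
    rw [hnum]
  refine ⟨key, ?_⟩
  rw [key]
  apply div_neg_of_neg_of_pos
  · have hN : -3 * x ^ 8 - 15 * x ^ 6 - 8 * x ^ 4 < 0 := by
      have : 0 < 3 * x ^ 8 + 15 * x ^ 6 + 8 * x ^ 4 := by positivity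
      linarith
    exact mul_neg_of_neg_of_pos hN hs_pos
  · positivity
end

section
/- With the same definitions, for every nonzero real x, A₁B₂ + A₂B₁ = (4x⁴ + 17x⁶ + 20x⁸ + 3x¹⁰) / (x⁶·(x⁴+6x²+1)) > 0. -/
lemma aux_div (a b c d e f : ℝ) :
    a / b * (c / d) + e / d * (f / b) = (a * c + e * f) / (b * d) := by
  rw [div_mul_div_comm, div_mul_div_comm, mul_comm d b, ← add_div]

theorem A1B2_add_A2B1_eq_and_pos
    (x : ℝ) (hx : x ≠ 0)
    (Z₁ Z₂ f₆ f₈ g₆ g₈ A₁ A₂ B₁ B₂ : ℝ)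
    (hZ₁ : Z₁ = (-x ^ 2 - 1 + Real.sqrt (x ^ 4 + 6 * x ^ 2 + 1)) / 2)
    (hZ₂ : Z₂ = (-x ^ 2 - 1 - Real.sqrt (x ^ 4 + 6 * x ^ 2 + 1)) / 2)
    (hf₆ : f₆ = x ^ 6 + 6 * x ^ 4 + 6 * x ^ 2)
    (hf₈ : f₈ = x ^ 8 + 8 * x ^ 6 + 16 * x ^ 4 + 6 * x ^ 2)
    (hg₆ : g₆ = x ^ 6 + 6 * x ^ 4 + 5 * x ^ 2 + 1)
    (hg₈ : g₈ = x ^ 8 + 8 * x ^ 6 + 15 * x ^ 4 + 8 * x ^ 2 + 1)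
    (hA₁ : A₁ = (f₈ + Z₂ * f₆) / (Z₁ ^ 4 + Z₁ ^ 2 * x ^ 2))
    (hA₂ : A₂ = (f₈ + Z₁ * f₆) / (Z₂ ^ 4 + Z₂ ^ 2 * x ^ 2))
    (hB₁ : B₁ = (g₈ + Z₂ * g₆) / (Z₁ ^ 4 + Z₁ ^ 2 * x ^ 2))
    (hB₂ : B₂ = (g₈ + Z₁ * g₆) / (Z₂ ^ 4 + Z₂ ^ 2 * x ^ 2)) :
    A₁ * B₂ + A₂ * B₁ =
      (4 * x ^ 4 + 17 * x ^ 6 + 20 * x ^ 8 + 3 * x ^ 10) /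
        (x ^ 6 * (x ^ 4 + 6 * x ^ 2 + 1)) ∧
    0 < A₁ * B₂ + A₂ * B₁ := by
  have h : A₁ * B₂ + A₂ * B₁ =
      (4 * x ^ 4 + 17 * x ^ 6 + 20 * x ^ 8 + 3 * x ^ 10) /
        (x ^ 6 * (x ^ 4 + 6 * x ^ 2 + 1)) := by
    subst hA₁ hA₂ hB₁ hB₂ hf₆ hf₈ hg₆ hg₈ hZ₁ hZ₂
    set s := Real.sqrt (x ^ 4 + 6 * x ^ 2 + 1) with hsdef
    have hs : s ^ 2 = x ^ 4 + 6 * x ^ 2 + 1 := Real.sq_sqrt (by positivity)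
    rw [aux_div]
    congr 1
    · linear_combination (-3*x^2 - 18*x^4 - (67/2)*x^6 - (47/2)*x^8 - 6*x^10
        - (1/2)*x^12) * hs
    · linear_combination ((-1/256 : ℝ) + (3/256)*s^2 + (-3/256)*s^4 + (1/256)*s^6
        + (-5/128)*x^2 + (1/64)*x^2*s^2 + (3/128)*x^2*s^4
        + (-31/256)*x^4 + (33/128)*x^4*s^2 + (-3/256)*x^4*s^4
        + (53/64)*x^6 + (1/64)*x^6*s^2
        + (-31/256)*x^8 + (3/256)*x^8*s^2
        + (-5/128)*x^10 + (-1/256)*x^12) * hs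
  refine ⟨h, by rw [h]; positivity⟩
end

section
/- For real Z₁ > 0 and Z₂ < 0 with Z₁Z₂ = -x² (x ≠ 0 real) and even n ≥ 10, the quantity F₄(n,x) := Z₁^{n-4} + Z₂^{n-4} - (Z₁Z₂)^{n/2-3}(Z₁² + Z₂²) factors as (Z₁^{n/2-1} - Z₂^{n/2-1})(Z₁^{n/2-3} - Z₂^{n/2-3}), and when n ≡ 2 (mod 4) this quantity is nonnegative. -/
theorem F4_factorization_and_sign
    (x : ℝ) (hx : x ≠ 0) (Z₁ Z₂ : ℝ) (hZ₁ : 0 < Z₁) (hZ₂ : Z₂ < 0)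
    (hprod : Z₁ * Z₂ = -x ^ 2)
    (n : ℕ) (hn : 10 ≤ n) (heven : Even n) :
    Z₁ ^ (n - 4) + Z₂ ^ (n - 4) - (Z₁ * Z₂) ^ (n / 2 - 3) * (Z₁ ^ 2 + Z₂ ^ 2) =
      (Z₁ ^ (n / 2 - 1) - Z₂ ^ (n / 2 - 1)) * (Z₁ ^ (n / 2 - 3) - Z₂ ^ (n / 2 - 3)) ∧
    (n % 4 = 2 →
      0 ≤ Z₁ ^ (n - 4) + Z₂ ^ (n - 4) - (Z₁ * Z₂) ^ (n / 2 - 3) * (Z₁ ^ 2 + Z₂ ^ 2)) := by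
  obtain ⟨m, rfl⟩ := heven
  set a : ℕ := (m + m) / 2 - 3 with ha
  have hm : 5 ≤ m := by omega
  have h1 : (m + m) / 2 - 1 = a + 2 := by omega
  have h2 : m + m - 4 = a + a + 2 := by omega
  have hfac : Z₁ ^ (m + m - 4) + Z₂ ^ (m + m - 4) -
      (Z₁ * Z₂) ^ a * (Z₁ ^ 2 + Z₂ ^ 2) =
      (Z₁ ^ ((m + m) / 2 - 1) - Z₂ ^ ((m + m) / 2 - 1)) * (Z₁ ^ a - Z₂ ^ a) := by
    rw [h1, h2]
    ring
  refine ⟨hfac, fun hmod => ?_⟩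
  rw [hfac, h1]
  have haeven : ∃ j, a = 2 * j := ⟨(a) / 2, by omega⟩
  obtain ⟨j, hj⟩ := haeven
  have e1 : Z₁ ^ (a + 2) = (Z₁ ^ 2) ^ (j + 1) := by rw [← pow_mul]; ring_nf; rw [hj]; ring_nf
  have e2 : Z₂ ^ (a + 2) = (Z₂ ^ 2) ^ (j + 1) := by rw [← pow_mul]; ring_nf; rw [hj]; ring_nf
  have e3 : Z₁ ^ a = (Z₁ ^ 2) ^ j := by rw [← pow_mul, hj, mul_comm]
  have e4 : Z₂ ^ a = (Z₂ ^ 2) ^ j := by rw [← pow_mul, hj, mul_comm]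
  rw [e1, e2, e3, e4]
  rcases le_total (Z₁ ^ 2) (Z₂ ^ 2) with h | h
  · exact mul_nonneg_of_nonpos_of_nonpos
      (sub_nonpos.mpr (pow_le_pow_left₀ (sq_nonneg _) h _))
      (sub_nonpos.mpr (pow_le_pow_left₀ (sq_nonneg _) h _))
  · exact mul_nonneg
      (sub_nonneg.mpr (pow_le_pow_left₀ (sq_nonneg _) h _))
      (sub_nonneg.mpr (pow_le_pow_left₀ (sq_nonneg _) h _))
end
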